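/- For all x, y, z ∈ ℍ one has the inclusions G⋔([x,z)) ⊆ G⋔([x,y)) ∪ G⋔([y,z)) and G⋔((x,z]) ⊆ G⋔((x,y]) ∪ G⋔((y,z]). -/

import Mathlib

/- STATEMENT 4: For all x, y, z ∈ ℍ one has the inclusions
G⋔([x,z)) ⊆ G⋔([x,y)) ∪ G⋔([y,z)) and G⋔((x,z]) ⊆ G⋔((x,y]) ∪ G⋔((y,z]). -/

open OnePoint
open scoped UpperHalfPlane

noncomputable section

/-- The geodesic of ℍ with ideal endpoints the unordered pair `s` of boundary points:
a Euclidean half-circle for a pair of distinct reals, a vertical line for a pair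
`{x, ∞}`, and ∅ for a diagonal pair. -/
def geod (s : Sym2 (OnePoint ℝ)) : Set ℍ :=
  {z | (∃ a b : ℝ, a ≠ b ∧ s = s((a : OnePoint ℝ), (b : OnePoint ℝ)) ∧
          ‖(z : ℂ) - (↑a + ↑b) / 2‖ = |b - a| / 2) ∨
       (∃ x : ℝ, s = s((x : OnePoint ℝ), ∞) ∧ z.re = x)}

/-- The half-open hyperbolic segment `[x,y)`; the segment `(x,y]` is `segCO y x`. -/
def segCO (x y : ℍ) : Set ℍ := {z | dist x z + dist z y = dist x y} \ {y}

/-- `G⋔(I)`: the set of geodesics crossing `I` in exactly one point. -/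
def Gcross (I : Set ℍ) : Set (Sym2 (OnePoint ℝ)) := {s | ∃ z, geod s ∩ I = {z}}


open UpperHalfPlane Real Set Matrix Matrix.SpecialLinearGroup
open scoped MatrixGroups
set_option maxHeartbeats 1600000

def vert (t : ℝ) : ℍ := UpperHalfPlane.mk ⟨0, Real.exp t⟩ (Real.exp_pos t)

@[simp] lemma vert_re (t : ℝ) : (vert t).re = 0 := rfl
@[simp] lemma vert_im (t : ℝ) : (vert t).im = Real.exp t := rfl

lemma dist_vert (s t : ℝ) : dist (vert s) (vert t) = |s - t| := by
  have := (UpperHalfPlane.isometry_vertical_line 0).dist_eq s t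
  simpa [vert, Real.dist_eq] using this

lemma vert_injective : Function.Injective vert := by
  intro s t h
  have : Real.exp s = Real.exp t := congrArg UpperHalfPlane.im h
  exact Real.exp_injective this

lemma vert_of_re_eq (w : ℍ) (h : w.re = 0) : vert (Real.log w.im) = w := by
  apply UpperHalfPlane.ext
  apply Complex.ext
  · simpa using h.symm
  · simpa using Real.exp_log w.im_pos

lemma cosh_dist_vert (a : ℝ) (w : ℍ) :
    Real.cosh (dist (vert a) w) =
      1 + (w.re ^ 2 + (w.im - Real.exp a) ^ 2) / (2 * Real.exp a * w.im) := by
  rw [UpperHalfPlane.cosh_dist]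
  congr 1
  rw [Complex.dist_eq, Complex.sq_norm, Complex.normSq_apply]
  have h1 : ((vert a : ℂ) - w).re = -w.re := by simp [UpperHalfPlane.coe_re]
  have h2 : ((vert a : ℂ) - w).im = Real.exp a - w.im := by simp [UpperHalfPlane.coe_im]
  rw [h1, h2]
  have : (vert a).im = Real.exp a := rfl
  rw [this]
  ring

lemma real_btw (a b L : ℝ) : |a - L| + |L - b| = |a - b| ↔ L ∈ Set.uIcc a b := by
  rw [Set.mem_uIcc]
  constructor
  · intro h
    rcases le_total a b with hab | hab
    · left
      constructor <;> by_contra hc <;> push_neg at hc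
      · rw [abs_of_nonneg (by linarith), abs_of_nonpos (by linarith),
          abs_of_nonpos (by linarith)] at h; linarith
      · rw [abs_of_nonpos (by linarith), abs_of_nonneg (by linarith),
          abs_of_nonpos (by linarith)] at h; linarith
    · right
      constructor <;> by_contra hc <;> push_neg at hc
      · rw [abs_of_nonneg (by linarith), abs_of_nonpos (by linarith),
          abs_of_nonneg (by linarith)] at h; linarith
      · rw [abs_of_nonpos (by linarith), abs_of_nonneg (by linarith),
          abs_of_nonneg (by linarith)] at h; linarith
  · rintro (⟨h1, h2⟩ | ⟨h1, h2⟩)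
    · rw [abs_of_nonpos (by linarith), abs_of_nonpos (by linarith),
        abs_of_nonpos (by linarith)]; ring
    · rw [abs_of_nonneg (by linarith), abs_of_nonneg (by linarith),
        abs_of_nonneg (by linarith)]; ring

lemma dist_vert_ge (a : ℝ) (w : ℍ) : |a - Real.log w.im| ≤ dist (vert a) w := by
  have := UpperHalfPlane.dist_log_im_le (vert a) w
  simpa [Real.dist_eq, Real.log_exp] using this

lemma axis_between (a b : ℝ) (w : ℍ) :
    dist (vert a) w + dist w (vert b) = |a - b| ↔
      w.re = 0 ∧ Real.log w.im ∈ Set.uIcc a b := by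
  set L := Real.log w.im with hLdef
  constructor
  · intro h
    have h1 : |a - L| ≤ dist (vert a) w := dist_vert_ge a w
    have h2 : |L - b| ≤ dist w (vert b) := by
      rw [dist_comm]
      simpa [abs_sub_comm] using dist_vert_ge b w
    have h3 : |a - b| ≤ |a - L| + |L - b| := abs_sub_le a L b
    have e1 : dist (vert a) w = |a - L| := by linarith
    have e2 : |a - L| + |L - b| = |a - b| := by linarith
    refine ⟨?_, (real_btw a b L).1 e2⟩
    have hL : Real.exp L = w.im := Real.exp_log w.im_pos
    have hcosh := congrArg Real.cosh e1
    rw [cosh_dist_vert, Real.cosh_abs] at hcosh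
    have hx : Real.cosh (a - L) = 1 + (w.im - Real.exp a) ^ 2 / (2 * Real.exp a * w.im) := by
      rw [Real.cosh_eq, neg_sub, Real.exp_sub, Real.exp_sub, hL]
      have hE := Real.exp_pos a
      have hI := w.im_pos
      field_simp
      ring
    rw [hx] at hcosh
    have hD : (0:ℝ) < 2 * Real.exp a * w.im := by positivity
    have hsq : w.re ^ 2 = 0 := by
      have := sub_eq_zero.2 hcosh
      have h' : (w.re ^ 2) / (2 * Real.exp a * w.im) = 0 := by
        field_simp at this ⊢
        linarith
      exact (div_eq_zero_iff.1 h').resolve_right hD.ne'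
    exact pow_eq_zero_iff two_ne_zero |>.1 hsq
  · rintro ⟨hre, hLm⟩
    have hw : w = vert L := (vert_of_re_eq w hre).symm
    rw [hw, dist_vert, dist_vert]
    exact (real_btw a b L).2 hLm

def Qf (α β γ : ℝ) (z : ℍ) : ℝ := α * (z.re ^ 2 + z.im ^ 2) + β * z.re + γ

lemma det_coords (g : SL(2, ℝ)) : g 0 0 * g 1 1 - g 0 1 * g 1 0 = 1 := by
  have := g.prop
  rw [Matrix.det_fin_two] at this
  exact this

lemma smul_coords (g : SL(2, ℝ)) (z : ℍ) :
    (g • z).re = ((g 0 0 * z.re + g 0 1) * (g 1 0 * z.re + g 1 1) + g 0 0 * g 1 0 * z.im ^ 2) /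
      ((g 1 0 * z.re + g 1 1) ^ 2 + (g 1 0 * z.im) ^ 2) ∧
    (g • z).im = z.im / ((g 1 0 * z.re + g 1 1) ^ 2 + (g 1 0 * z.im) ^ 2) := by
  have hdet := det_coords g
  have happ := UpperHalfPlane.specialLinearGroup_apply g z
  simp only [Algebra.algebraMap_self_apply] at happ
  have hN : Complex.normSq ((g 1 0 : ℂ) * z + (g 1 1 : ℂ)) =
      (g 1 0 * z.re + g 1 1) ^ 2 + (g 1 0 * z.im) ^ 2 := by
    rw [Complex.normSq_apply]
    simp [UpperHalfPlane.coe_re, UpperHalfPlane.coe_im]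
    ring
  constructor
  · rw [happ, UpperHalfPlane.mk_re, Complex.div_re, hN, ← add_div]
    congr 1
    simp [UpperHalfPlane.coe_re, UpperHalfPlane.coe_im]
    ring
  · rw [happ, UpperHalfPlane.mk_im, Complex.div_im, hN, div_sub_div_same]
    congr 1
    simp only [Complex.add_re, Complex.add_im, Complex.mul_re, Complex.mul_im,
      Complex.ofReal_re, Complex.ofReal_im, UpperHalfPlane.coe_re, UpperHalfPlane.coe_im]
    linear_combination z.im * hdet

lemma aux_id (α β γ a b c d E : ℝ) (hE : 0 < E) (hN : 0 < d ^ 2 + (c * E) ^ 2)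
    (hdet : a * d - b * c = 1) :
    α * (((b * d + a * c * E ^ 2) / (d ^ 2 + (c * E) ^ 2)) ^ 2 +
        (E / (d ^ 2 + (c * E) ^ 2)) ^ 2)
      + β * ((b * d + a * c * E ^ 2) / (d ^ 2 + (c * E) ^ 2)) + γ
    = ((α * a ^ 2 + β * a * c + γ * c ^ 2) * E + (α * b ^ 2 + β * b * d + γ * d ^ 2) * E⁻¹) *
        (E / (d ^ 2 + (c * E) ^ 2)) := by
  have hEne := hE.ne'
  have hNne := hN.ne'
  have hNne' : d ^ 2 + c ^ 2 * E ^ 2 ≠ 0 := by rw [← mul_pow]; exact hNne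
  field_simp
  linear_combination (-(α * E ^ 2 * (a * d - b * c + 1))) * hdet


lemma denom_pos (g : SL(2, ℝ)) (z : ℍ) :
    0 < (g 1 0 * z.re + g 1 1) ^ 2 + (g 1 0 * z.im) ^ 2 := by
  have hdet := det_coords g
  rcases eq_or_ne (g 1 0) 0 with h | h
  · have h1 : g 1 1 ≠ 0 := by
      intro h1; rw [h, h1] at hdet; simp at hdet
    have : (0:ℝ) < (g 1 1) ^ 2 := by positivity
    simp [h]
    positivity
  · have him := z.im_pos
    have : (0:ℝ) < (g 1 0 * z.im) ^ 2 := by positivity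
    nlinarith [sq_nonneg (g 1 0 * z.re + g 1 1)]

lemma Qf_smul (α β γ t : ℝ) (g : SL(2, ℝ)) :
    Qf α β γ (g • vert t) =
      ((α * (g 0 0) ^ 2 + β * (g 0 0) * (g 1 0) + γ * (g 1 0) ^ 2) * Real.exp t +
       (α * (g 0 1) ^ 2 + β * (g 0 1) * (g 1 1) + γ * (g 1 1) ^ 2) * Real.exp (-t)) *
        (g • vert t).im := by
  obtain ⟨hre, him⟩ := smul_coords g (vert t)
  have hdet := det_coords g
  have hN := denom_pos g (vert t)
  rw [vert_re, vert_im] at hre him hN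
  have hE := Real.exp_pos t
  simp only [mul_zero, zero_add] at hre him hN
  rw [Qf, hre, him, Real.exp_neg]
  exact aux_id α β γ (g 0 0) (g 0 1) (g 1 0) (g 1 1) (Real.exp t) hE hN hdet

lemma seg_eq (g : SL(2, ℝ)) (tp tq : ℝ) :
    {w : ℍ | dist (g • vert tp) w + dist w (g • vert tq) = dist (g • vert tp) (g • vert tq)}
      = (fun t => g • vert t) '' Set.uIcc tp tq := by
  ext w
  simp only [Set.mem_setOf_eq, Set.mem_image]
  constructor
  · intro h
    have hw : w = g • (g⁻¹ • w) := (smul_inv_smul g w).symm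
    rw [hw, dist_smul, dist_smul, dist_smul, dist_vert] at h
    obtain ⟨hre, hL⟩ := (axis_between tp tq (g⁻¹ • w)).1 h
    exact ⟨Real.log (g⁻¹ • w).im, hL, by rw [vert_of_re_eq _ hre]; exact hw.symm⟩
  · rintro ⟨t, ht, rfl⟩
    rw [dist_smul, dist_smul, dist_smul, dist_vert, dist_vert, dist_vert]
    exact (real_btw tp tq t).2 ht

lemma smul_vert_injective (g : SL(2, ℝ)) : Function.Injective (fun t => g • vert t) := by
  intro s t h
  exact vert_injective (smul_left_cancel g h)

lemma exists_axis (p q : ℍ) : ∃ M : SL(2, ℝ), (M • p).re = 0 ∧ (M • q).re = 0 := by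
  rcases eq_or_ne p.re q.re with hre | hre
  · -- translation by -p.re
    refine ⟨⟨!![1, -p.re; 0, 1], by simp [Matrix.det_fin_two_of]⟩, ?_, ?_⟩ <;>
    · erw [(smul_coords _ _).1]
      simp [← hre]
  · -- circle case
    set c : ℝ := (p.re ^ 2 + p.im ^ 2 - q.re ^ 2 - q.im ^ 2) / (2 * (p.re - q.re)) with hc
    set r : ℝ := Real.sqrt ((p.re - c) ^ 2 + p.im ^ 2) with hr
    have hrpos : 0 < r := by
      apply Real.sqrt_pos.2
      have := p.im_pos
      positivity
    have hrp : (p.re - c) ^ 2 + p.im ^ 2 = r ^ 2 := by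
      rw [hr, Real.sq_sqrt]
      have := p.im_pos
      positivity
    have hrq : (q.re - c) ^ 2 + q.im ^ 2 = r ^ 2 := by
      rw [← hrp, hc]
      have h2 : p.re - q.re ≠ 0 := sub_ne_zero.2 hre
      field_simp
      ring
    set k : ℝ := (Real.sqrt (2 * r))⁻¹ with hk
    have hkpos : 0 < k := by
      rw [hk]
      have : 0 < Real.sqrt (2 * r) := Real.sqrt_pos.2 (by linarith)
      positivity
    have hk2 : k ^ 2 * (2 * r) = 1 := by
      rw [hk, ← Real.sqrt_inv, Real.sq_sqrt (by positivity)]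
      field_simp
    set M : SL(2, ℝ) := ⟨!![k, -(k * (c + r)); k, -(k * (c - r))], by
      rw [Matrix.det_fin_two_of]; linear_combination hk2⟩ with hM
    have h00 : M 0 0 = k := rfl
    have h01 : M 0 1 = -(k * (c + r)) := rfl
    have h10 : M 1 0 = k := rfl
    have h11 : M 1 1 = -(k * (c - r)) := rfl
    refine ⟨M, ?_, ?_⟩
    · rw [(smul_coords _ _).1, h00, h01, h10, h11]
      apply div_eq_zero_iff.2
      left
      linear_combination k ^ 2 * hrp
    · rw [(smul_coords _ _).1, h00, h01, h10, h11]
      apply div_eq_zero_iff.2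
      left
      linear_combination k ^ 2 * hrq

lemma exists_param (p q : ℍ) :
    ∃ (g : SL(2, ℝ)) (tp tq : ℝ), g • vert tp = p ∧ g • vert tq = q := by
  obtain ⟨M, hp, hq⟩ := exists_axis p q
  exact ⟨M⁻¹, Real.log (M • p).im, Real.log (M • q).im,
    by rw [vert_of_re_eq _ hp]; exact inv_smul_smul M p,
    by rw [vert_of_re_eq _ hq]; exact inv_smul_smul M q⟩

lemma mul_exp_aux (A B t : ℝ) :
    (A * Real.exp t + B * Real.exp (-t)) * Real.exp t = A * Real.exp t ^ 2 + B := by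
  have h1 : Real.exp (-t) * Real.exp t = 1 := by
    rw [← Real.exp_add, neg_add_cancel, Real.exp_zero]
  linear_combination B * h1

lemma cross_iff (α β γ : ℝ) (p q : ℍ) :
    (∃ w, {z : ℍ | Qf α β γ z = 0} ∩ segCO p q = {w}) ↔
      ((Qf α β γ p = 0 ∧ Qf α β γ q ≠ 0) ∨ Qf α β γ p * Qf α β γ q < 0) := by
  rcases eq_or_ne p q with rfl | hpq
  · constructor
    · rintro ⟨w, hw⟩
      exfalso
      have hmem : w ∈ {z : ℍ | Qf α β γ z = 0} ∩ segCO p p := by rw [hw]; rfl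
      obtain ⟨-, hd, hne⟩ := hmem
      simp only [Set.mem_setOf_eq, dist_self] at hd
      apply hne
      rw [Set.mem_singleton_iff]
      have h2 : dist w p = 0 := by
        have h3 := dist_nonneg (x := p) (y := w)
        have h4 := dist_nonneg (x := w) (y := p)
        linarith
      exact dist_eq_zero.1 h2
    · rintro (⟨h1, h2⟩ | h3)
      · exact absurd h1 h2
      · exact absurd h3 (by nlinarith [sq_nonneg (Qf α β γ p)])
  obtain ⟨g, tp, tq, hgp, hgq⟩ := exists_param p q
  have htpq : tp ≠ tq := fun h => hpq (by rw [← hgp, ← hgq, h])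
  set A := α * (g 0 0) ^ 2 + β * (g 0 0) * (g 1 0) + γ * (g 1 0) ^ 2 with hA
  set B := α * (g 0 1) ^ 2 + β * (g 0 1) * (g 1 1) + γ * (g 1 1) ^ 2 with hB
  have hQ0 : ∀ t, Qf α β γ (g • vert t) = 0 ↔ A * Real.exp t + B * Real.exp (-t) = 0 := by
    intro t
    rw [Qf_smul α β γ t g, ← hA, ← hB]
    constructor
    · intro hz
      rcases mul_eq_zero.1 hz with hz | hz
      · exact hz
      · exact absurd hz (g • vert t).im_pos.ne'
    · intro hz; rw [hz, zero_mul]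
  have hzero : ¬(A = 0 ∧ B = 0) → ∀ t₁ t₂, A * Real.exp t₁ + B * Real.exp (-t₁) = 0 →
      A * Real.exp t₂ + B * Real.exp (-t₂) = 0 → t₁ = t₂ := by
    intro hAB t₁ t₂ h₁ h₂
    have hA0 : A ≠ 0 := by
      intro hA0
      rw [hA0, zero_mul, zero_add, mul_eq_zero] at h₁
      rcases h₁ with hz | hz
      · exact hAB ⟨hA0, hz⟩
      · exact absurd hz (Real.exp_pos _).ne'
    have e₁ : A * Real.exp t₁ ^ 2 + B = 0 := by
      rw [← mul_exp_aux A B t₁, h₁, zero_mul]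
    have e₂ : A * Real.exp t₂ ^ 2 + B = 0 := by
      rw [← mul_exp_aux A B t₂, h₂, zero_mul]
    have hsq : Real.exp t₁ ^ 2 = Real.exp t₂ ^ 2 := by
      apply mul_left_cancel₀ hA0; linarith
    exact Real.exp_injective (by nlinarith [Real.exp_pos t₁, Real.exp_pos t₂])
  have hmem : ∀ z, z ∈ segCO p q ↔ ∃ t, t ∈ Set.uIcc tp tq ∧ t ≠ tq ∧ z = g • vert t := by
    intro z
    constructor
    · rintro ⟨hd, hz⟩
      have himg : z ∈ (fun t => g • vert t) '' Set.uIcc tp tq := by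
        rw [← seg_eq g tp tq]
        show dist (g • vert tp) z + dist z (g • vert tq) = dist (g • vert tp) (g • vert tq)
        rw [hgp, hgq]
        exact hd
      obtain ⟨t, ht, hzt⟩ := himg
      refine ⟨t, ht, ?_, hzt.symm⟩
      intro hc
      apply hz
      rw [Set.mem_singleton_iff, ← hzt]
      simp only [hc, hgq]
    · rintro ⟨t, ht, htq, rfl⟩
      constructor
      · have himg : (g • vert t) ∈ (fun s => g • vert s) '' Set.uIcc tp tq := ⟨t, ht, rfl⟩
        rw [← seg_eq g tp tq] at himg
        have := himg
        simp only [Set.mem_setOf_eq, hgp, hgq] at this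
        exact this
      · intro hc
        rw [Set.mem_singleton_iff, ← hgq] at hc
        exact htq (vert_injective (smul_left_cancel g hc))
  have hQp : Qf α β γ p = (A * Real.exp tp + B * Real.exp (-tp)) * p.im := by
    conv_lhs => rw [← hgp]
    rw [Qf_smul α β γ tp g, ← hA, ← hB, hgp]
  have hQq : Qf α β γ q = (A * Real.exp tq + B * Real.exp (-tq)) * q.im := by
    conv_lhs => rw [← hgq]
    rw [Qf_smul α β γ tq g, ← hA, ← hB, hgq]
  have hQp0 : Qf α β γ p = 0 ↔ A * Real.exp tp + B * Real.exp (-tp) = 0 := by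
    conv_lhs => rw [← hgp]
    exact hQ0 tp
  have hQq0 : Qf α β γ q = 0 ↔ A * Real.exp tq + B * Real.exp (-tq) = 0 := by
    conv_lhs => rw [← hgq]
    exact hQ0 tq
  constructor
  · -- hard direction: crossing implies sign condition
    rintro ⟨w, hw⟩
    by_contra hno
    push_neg at hno
    obtain ⟨himp, hge⟩ := hno
    rcases eq_or_ne (Qf α β γ p) 0 with hp0 | hp0
    · -- p on the geodesic; then q also on it, so the whole segment is in S
      have hq0 : Qf α β γ q = 0 := himp hp0
      have hAB : A = 0 ∧ B = 0 := by
        by_contra hAB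
        exact htpq (hzero hAB tp tq (hQp0.1 hp0) (hQq0.1 hq0))
      -- every point of the segment is in S; exhibit two distinct points
      have hptw : p = w := by
        rw [← Set.mem_singleton_iff, ← hw]
        exact ⟨hp0, (hmem p).2 ⟨tp, Set.left_mem_uIcc, htpq, hgp.symm⟩⟩
      have hmid : g • vert ((tp + tq) / 2) = w := by
        rw [← Set.mem_singleton_iff, ← hw]
        refine ⟨(hQ0 _).2 ?_, (hmem _).2 ⟨(tp + tq) / 2, ?_, ?_, rfl⟩⟩
        · rw [hAB.1, hAB.2, zero_mul, zero_mul, add_zero]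
        · rcases le_total tp tq with hle | hle
          · rw [Set.uIcc_of_le hle]; constructor <;> [linarith; linarith]
          · rw [Set.uIcc_of_ge hle]; constructor <;> [linarith; linarith]
        · intro hc; exact htpq (by linarith)
      apply htpq
      have : g • vert tp = g • vert ((tp + tq) / 2) := by rw [hgp, hptw, hmid]
      have := vert_injective (smul_left_cancel g this)
      linarith
    · rcases eq_or_ne (Qf α β γ q) 0 with hq0 | hq0
      · -- q in S, p not: no crossing point at all
        have hwmem : w ∈ {z : ℍ | Qf α β γ z = 0} ∩ segCO p q := by rw [hw]; rfl
        obtain ⟨hwS, hwseg⟩ := hwmem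
        obtain ⟨t, ht, htq', rfl⟩ := (hmem w).1 hwseg
        have hAB : ¬(A = 0 ∧ B = 0) := by
          rintro ⟨ha, hb⟩
          apply hp0
          rw [hQp, ha, hb, zero_mul, zero_mul, add_zero, zero_mul]
        exact htq' (hzero hAB t tq ((hQ0 t).1 hwS) (hQq0.1 hq0))
      · -- both off S, same side: no crossing point
        have hgt : 0 < Qf α β γ p * Qf α β γ q :=
          lt_of_le_of_ne hge (Ne.symm (mul_ne_zero hp0 hq0))
        have hHpq : 0 < (A * Real.exp tp + B * Real.exp (-tp)) *
            (A * Real.exp tq + B * Real.exp (-tq)) := by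
          rw [hQp, hQq] at hgt
          by_contra hc
          push_neg at hc
          nlinarith [hgt, mul_pos p.im_pos q.im_pos]
        have hwmem : w ∈ {z : ℍ | Qf α β γ z = 0} ∩ segCO p q := by rw [hw]; rfl
        obtain ⟨hwS, hwseg⟩ := hwmem
        obtain ⟨t, ht, htq', rfl⟩ := (hmem w).1 hwseg
        have hts : A * Real.exp t + B * Real.exp (-t) = 0 := (hQ0 t).1 hwS
        have hA0 : A ≠ 0 := by
          intro hA0
          rw [hA0, zero_mul, zero_add, mul_eq_zero] at hts
          rcases hts with hz | hz
          · apply hp0; rw [hQp, hA0, hz, zero_mul, zero_mul, add_zero, zero_mul]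
          · exact absurd hz (Real.exp_pos _).ne'
        have et : A * Real.exp t ^ 2 + B = 0 := by
          rw [← mul_exp_aux A B t, hts, zero_mul]
        have eprod : 0 < (A * Real.exp tp ^ 2 + B) * (A * Real.exp tq ^ 2 + B) := by
          rw [← mul_exp_aux A B tp, ← mul_exp_aux A B tq]
          by_contra hc
          push_neg at hc
          nlinarith [hHpq, mul_pos (Real.exp_pos tp) (Real.exp_pos tq)]
        -- t between tp and tq, exp monotone, contradiction
        have hbet : (Real.exp tp ^ 2 - Real.exp t ^ 2) * (Real.exp tq ^ 2 - Real.exp t ^ 2) ≤ 0 := by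
          rcases Set.mem_uIcc.1 ht with ⟨h1, h2⟩ | ⟨h1, h2⟩
          · have e1 := Real.exp_le_exp.2 h1
            have e2 := Real.exp_le_exp.2 h2
            have s1 : Real.exp tp ^ 2 ≤ Real.exp t ^ 2 :=
              pow_le_pow_left₀ (Real.exp_pos tp).le e1 2
            have s2 : Real.exp t ^ 2 ≤ Real.exp tq ^ 2 :=
              pow_le_pow_left₀ (Real.exp_pos t).le e2 2
            exact mul_nonpos_iff.2 (Or.inr ⟨by linarith, by linarith⟩)
          · have e1 := Real.exp_le_exp.2 h1
            have e2 := Real.exp_le_exp.2 h2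
            have s1 : Real.exp tq ^ 2 ≤ Real.exp t ^ 2 :=
              pow_le_pow_left₀ (Real.exp_pos tq).le e1 2
            have s2 : Real.exp t ^ 2 ≤ Real.exp tp ^ 2 :=
              pow_le_pow_left₀ (Real.exp_pos t).le e2 2
            exact mul_nonpos_iff.2 (Or.inl ⟨by linarith, by linarith⟩)
        have f1 : A * Real.exp tp ^ 2 + B = A * (Real.exp tp ^ 2 - Real.exp t ^ 2) := by
          linear_combination et
        have f2 : A * Real.exp tq ^ 2 + B = A * (Real.exp tq ^ 2 - Real.exp t ^ 2) := by
          linear_combination et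
        rw [f1, f2] at eprod
        nlinarith [eprod, hbet, sq_nonneg A]
  · -- easy direction: sign condition implies crossing
    rintro (⟨hp0, hq0⟩ | hlt)
    · refine ⟨p, ?_⟩
      apply Set.eq_singleton_iff_unique_mem.2
      refine ⟨⟨hp0, (hmem p).2 ⟨tp, Set.left_mem_uIcc, htpq, hgp.symm⟩⟩, ?_⟩
      rintro z ⟨hzS, hzseg⟩
      obtain ⟨t, ht, htq', rfl⟩ := (hmem z).1 hzseg
      have hAB : ¬(A = 0 ∧ B = 0) := by
        rintro ⟨ha, hb⟩
        apply hq0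
        rw [hQq, ha, hb, zero_mul, zero_mul, add_zero, zero_mul]
      rw [← hgp]
      congr 1
      exact congrArg vert (hzero hAB t tp ((hQ0 t).1 hzS) (hQp0.1 hp0))
    · -- opposite sides: construct the crossing point
      have hHpq : (A * Real.exp tp + B * Real.exp (-tp)) *
          (A * Real.exp tq + B * Real.exp (-tq)) < 0 := by
        rw [hQp, hQq] at hlt
        by_contra hc
        push_neg at hc
        nlinarith [hlt, mul_pos p.im_pos q.im_pos]
      have hA0 : A ≠ 0 := by
        intro hA0
        rw [hA0, zero_mul, zero_add, zero_mul, zero_add] at hHpq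
        nlinarith [sq_nonneg B, Real.exp_pos (-tp), Real.exp_pos (-tq),
          mul_pos (Real.exp_pos (-tp)) (Real.exp_pos (-tq)), sq_nonneg (B * Real.exp (-tp) - B * Real.exp (-tq))]
      have eprod : (A * Real.exp tp ^ 2 + B) * (A * Real.exp tq ^ 2 + B) < 0 := by
        rw [← mul_exp_aux A B tp, ← mul_exp_aux A B tq]
        by_contra hc
        push_neg at hc
        nlinarith [hHpq, mul_pos (Real.exp_pos tp) (Real.exp_pos tq)]
      set x := -B / A with hx
      have hAx : A * x + B = 0 := by rw [hx]; field_simp; ring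
      have hfac : ∀ s : ℝ, A * s + B = A * (s - x) := by
        intro s; rw [hx]; field_simp; ring
      have eprod' : (Real.exp tp ^ 2 - x) * (Real.exp tq ^ 2 - x) < 0 := by
        rw [hfac, hfac] at eprod
        nlinarith [sq_nonneg A]
      have hxpos : 0 < x := by
        rcases mul_neg_iff.1 eprod' with ⟨h1, h2⟩ | ⟨h1, h2⟩
        · nlinarith [Real.exp_pos tq]
        · nlinarith [Real.exp_pos tp]
      set ts := Real.log x / 2 with hts
      have hets : Real.exp ts ^ 2 = x := by
        rw [hts, sq, ← Real.exp_add]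
        have : Real.log x / 2 + Real.log x / 2 = Real.log x := by ring
        rw [this, Real.exp_log hxpos]
      have hhts : A * Real.exp ts + B * Real.exp (-ts) = 0 := by
        have h2 : (A * Real.exp ts + B * Real.exp (-ts)) * Real.exp ts = 0 := by
          rw [mul_exp_aux, hets, hAx]
        rcases mul_eq_zero.1 h2 with hz | hz
        · exact hz
        · exact absurd hz (Real.exp_pos _).ne'
      have hbet : ts ∈ Set.uIcc tp tq ∧ ts ≠ tp ∧ ts ≠ tq := by
        rcases mul_neg_iff.1 eprod' with ⟨h1, h2⟩ | ⟨h1, h2⟩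
        · -- exp tq ^ 2 < x < exp tp ^ 2 : tq < ts < tp
          have l1 : Real.exp tq < Real.exp ts := by
            nlinarith [Real.exp_pos tq, Real.exp_pos ts, hets]
          have l2 : Real.exp ts < Real.exp tp := by
            nlinarith [Real.exp_pos tp, Real.exp_pos ts, hets]
          have m1 := Real.exp_lt_exp.1 l1
          have m2 := Real.exp_lt_exp.1 l2
          exact ⟨Set.mem_uIcc.2 (Or.inr ⟨le_of_lt m1, le_of_lt m2⟩), ne_of_lt m2, Ne.symm (ne_of_lt m1)⟩
        · have l1 : Real.exp tp < Real.exp ts := by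
            nlinarith [Real.exp_pos tp, Real.exp_pos ts, hets]
          have l2 : Real.exp ts < Real.exp tq := by
            nlinarith [Real.exp_pos tq, Real.exp_pos ts, hets]
          have m1 := Real.exp_lt_exp.1 l1
          have m2 := Real.exp_lt_exp.1 l2
          exact ⟨Set.mem_uIcc.2 (Or.inl ⟨le_of_lt m1, le_of_lt m2⟩), Ne.symm (ne_of_lt m1), ne_of_lt m2⟩
      refine ⟨g • vert ts, Set.eq_singleton_iff_unique_mem.2 ⟨⟨(hQ0 ts).2 hhts,
        (hmem _).2 ⟨ts, hbet.1, hbet.2.2, rfl⟩⟩, ?_⟩⟩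
      rintro z ⟨hzS, hzseg⟩
      obtain ⟨t, ht, htq', rfl⟩ := (hmem z).1 hzseg
      have hAB : ¬(A = 0 ∧ B = 0) := fun hc => hA0 hc.1
      exact congrArg (fun t => g • vert t) (hzero hAB t ts ((hQ0 t).1 hzS) hhts)

lemma circle_mem_iff (a b : ℝ) (z : ℍ) :
    ‖(z : ℂ) - (↑a + ↑b) / 2‖ = |b - a| / 2 ↔ Qf 1 (-(a + b)) (a * b) z = 0 := by
  have habs : (0:ℝ) ≤ ‖(z : ℂ) - (↑a + ↑b) / 2‖ := norm_nonneg _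
  have hr : (0:ℝ) ≤ |b - a| / 2 := by positivity
  rw [← Real.sqrt_sq habs, ← Real.sqrt_sq hr,
    Real.sqrt_inj (sq_nonneg _) (sq_nonneg _), Complex.sq_norm, Complex.normSq_apply]
  have hre : ((z : ℂ) - (↑a + ↑b) / 2).re = z.re - (a + b) / 2 := by
    simp [UpperHalfPlane.coe_re]
  have him : ((z : ℂ) - (↑a + ↑b) / 2).im = z.im := by
    simp [UpperHalfPlane.coe_im]
  rw [hre, him, div_pow, sq_abs, Qf]
  constructor <;> intro h <;> linear_combination h


lemma geod_eq_Qf (s : Sym2 (OnePoint ℝ)) : ∃ α β γ : ℝ, geod s = {z | Qf α β γ z = 0} := by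
  induction s using Sym2.ind with
  | _ x y =>
    induction x using OnePoint.rec with
    | infty =>
      induction y using OnePoint.rec with
      | infty =>
        refine ⟨0, 0, 1, ?_⟩
        ext z
        simp only [geod, Set.mem_setOf_eq, Qf]
        constructor
        · rintro (⟨a, b, hab, heq, -⟩ | ⟨c, heq, -⟩)
          · rw [Sym2.eq_iff] at heq
            rcases heq with ⟨h, -⟩ | ⟨h, -⟩ <;> exact absurd h.symm (OnePoint.coe_ne_infty _)
          · rw [Sym2.eq_iff] at heq
            rcases heq with ⟨h, -⟩ | ⟨-, h⟩ <;> exact absurd h.symm (OnePoint.coe_ne_infty c)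
        · intro h
          norm_num at h
      | coe a =>
        refine ⟨0, 1, -a, ?_⟩
        ext z
        simp only [geod, Set.mem_setOf_eq, Qf]
        constructor
        · rintro (⟨u, v, huv, heq, -⟩ | ⟨c, heq, hre⟩)
          · rw [Sym2.eq_iff] at heq
            rcases heq with ⟨h, -⟩ | ⟨h, -⟩ <;> exact absurd h.symm (OnePoint.coe_ne_infty _)
          · rw [Sym2.eq_iff] at heq
            rcases heq with ⟨h, -⟩ | ⟨-, h⟩
            · exact absurd h.symm (OnePoint.coe_ne_infty c)
            · rw [OnePoint.coe_eq_coe] at h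
              rw [hre, h]; ring
        · intro h
          right
          refine ⟨a, by rw [Sym2.eq_swap], by linarith [h]⟩
    | coe a =>
      induction y using OnePoint.rec with
      | infty =>
        refine ⟨0, 1, -a, ?_⟩
        ext z
        simp only [geod, Set.mem_setOf_eq, Qf]
        constructor
        · rintro (⟨u, v, huv, heq, -⟩ | ⟨c, heq, hre⟩)
          · rw [Sym2.eq_iff] at heq
            rcases heq with ⟨-, h⟩ | ⟨-, h⟩ <;> exact absurd h.symm (OnePoint.coe_ne_infty _)
          · rw [Sym2.eq_iff] at heq
            rcases heq with ⟨h, -⟩ | ⟨h, -⟩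
            · rw [OnePoint.coe_eq_coe] at h
              rw [hre, h]; ring
            · exact absurd h (OnePoint.coe_ne_infty a)
        · intro h
          right
          exact ⟨a, rfl, by linarith [h]⟩
      | coe b =>
        rcases eq_or_ne a b with rfl | hab
        · refine ⟨0, 0, 1, ?_⟩
          ext z
          simp only [geod, Set.mem_setOf_eq, Qf]
          constructor
          · rintro (⟨u, v, huv, heq, -⟩ | ⟨c, heq, -⟩)
            · rw [Sym2.eq_iff] at heq
              rcases heq with ⟨h1, h2⟩ | ⟨h1, h2⟩ <;> rw [OnePoint.coe_eq_coe] at h1 h2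
              · exact absurd (h1.symm.trans h2) huv
              · exact absurd (h2.symm.trans h1) huv
            · rw [Sym2.eq_iff] at heq
              rcases heq with ⟨-, h⟩ | ⟨h, -⟩ <;> exact absurd h (OnePoint.coe_ne_infty a)
          · intro h; norm_num at h
        · refine ⟨1, -(a + b), a * b, ?_⟩
          ext z
          simp only [geod, Set.mem_setOf_eq]
          constructor
          · rintro (⟨u, v, huv, heq, habs⟩ | ⟨c, heq, -⟩)
            · rw [Sym2.eq_iff] at heq
              rcases heq with ⟨h1, h2⟩ | ⟨h1, h2⟩ <;> rw [OnePoint.coe_eq_coe] at h1 h2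
              · rw [← h1, ← h2] at habs
                exact (circle_mem_iff a b z).1 habs
              · rw [← h1, ← h2] at habs
                have hnum : ((b : ℂ) + (a : ℂ)) = ((a : ℂ) + (b : ℂ)) := by ring
                rw [hnum, abs_sub_comm] at habs
                exact (circle_mem_iff a b z).1 habs
            · rw [Sym2.eq_iff] at heq
              rcases heq with ⟨-, h⟩ | ⟨h, -⟩
              · exact absurd h (OnePoint.coe_ne_infty b)
              · exact absurd h (OnePoint.coe_ne_infty a)
          · intro h
            left
            exact ⟨a, b, hab, rfl, (circle_mem_iff a b z).2 h⟩


theorem crossing_set_subset_union (x y z : ℍ) :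
    Gcross (segCO x z) ⊆ Gcross (segCO x y) ∪ Gcross (segCO y z) ∧
    Gcross (segCO z x) ⊆ Gcross (segCO y x) ∪ Gcross (segCO z y) := by
  have main : ∀ p q r : ℍ, Gcross (segCO p r) ⊆ Gcross (segCO p q) ∪ Gcross (segCO q r) := by
    intro p q r s hs
    obtain ⟨α, β, γ, hg⟩ := geod_eq_Qf s
    rw [Gcross, Set.mem_setOf_eq, hg] at hs
    have h1 := (cross_iff α β γ p r).1 hs
    have h2 : ((Qf α β γ p = 0 ∧ Qf α β γ q ≠ 0) ∨ Qf α β γ p * Qf α β γ q < 0) ∨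
        ((Qf α β γ q = 0 ∧ Qf α β γ r ≠ 0) ∨ Qf α β γ q * Qf α β γ r < 0) := by
      rcases h1 with ⟨hX, hZ⟩ | hXZ
      · rcases eq_or_ne (Qf α β γ q) 0 with hY | hY
        · exact Or.inr (Or.inl ⟨hY, hZ⟩)
        · exact Or.inl (Or.inl ⟨hX, hY⟩)
      · rcases eq_or_ne (Qf α β γ q) 0 with hY | hY
        · refine Or.inr (Or.inl ⟨hY, ?_⟩)
          intro hZ
          rw [hZ, mul_zero] at hXZ
          exact lt_irrefl 0 hXZ
        · rcases lt_trichotomy (Qf α β γ p * Qf α β γ q) 0 with h | h | h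
          · exact Or.inl (Or.inr h)
          · exfalso
            have hX0 : Qf α β γ p = 0 := by
              rcases mul_eq_zero.1 h with h' | h'
              · exact h'
              · exact absurd h' hY
            rw [hX0, zero_mul] at hXZ
            exact lt_irrefl 0 hXZ
          · refine Or.inr (Or.inr ?_)
            by_contra hc
            push_neg at hc
            nlinarith [mul_nonneg (sq_nonneg (Qf α β γ p)) hc,
              mul_pos h (by linarith : (0:ℝ) < -(Qf α β γ p * Qf α β γ r))]
      
    rcases h2 with ha | hb
    · left
      rw [Gcross, Set.mem_setOf_eq, hg]
      exact (cross_iff α β γ p q).2 ha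
    · right
      rw [Gcross, Set.mem_setOf_eq, hg]
      exact (cross_iff α β γ q r).2 hb
  refine ⟨main x y z, ?_⟩
  intro s hs
  exact (Set.union_comm (Gcross (segCO z y)) (Gcross (segCO y x))) ▸ (main z y x hs)
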